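/- Let m ≥ 3 and let n be a positive multiple of 11, and let 0 ≤ ℓ < n. Suppose there exists an integer k such that ℓ = (11k − 3m) mod n. Then the map g₁ defined on the vertices of the strong graph bundle C_m ⊠^{σ_ℓ} C_n by g₁(i,j) = (5i + 2j) mod 11 is an L(2,1)-labeling whose labels all lie in {0,1,…,10}. -/

import Mathlib

/-- One-directional step relation for the strong graph bundle `C_m ⊠^{σ_ℓ} C_n`:
(i) fiber edges, (ii) base steps `i → i+1` for `0 ≤ i ≤ m-2`,
(iii) seam edges from fiber over `m-1` to fiber over `0`, twisted by the cyclic `ℓ`-shift. -/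
def bundleStep (m n ℓ : ℕ) (u v : Fin m × ZMod n) : Prop :=
  (u.1 = v.1 ∧ (v.2 = u.2 + 1 ∨ v.2 = u.2 - 1)) ∨
  ((u.1 : ℕ) + 1 = (v.1 : ℕ) ∧ (v.2 = u.2 - 1 ∨ v.2 = u.2 ∨ v.2 = u.2 + 1)) ∨
  ((u.1 : ℕ) = m - 1 ∧ (v.1 : ℕ) = 0 ∧
    (v.2 = u.2 + (ℓ : ZMod n) - 1 ∨ v.2 = u.2 + (ℓ : ZMod n) ∨ v.2 = u.2 + (ℓ : ZMod n) + 1))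

/-- The strong graph bundle `C_m ⊠^{σ_ℓ} C_n` with base cycle `C_m`, fiber cycle `C_n`
and cyclic `ℓ`-shift. -/
def strongBundle (m n ℓ : ℕ) : SimpleGraph (Fin m × ZMod n) where
  Adj u v := u ≠ v ∧ (bundleStep m n ℓ u v ∨ bundleStep m n ℓ v u)
  symm := ⟨fun u v ⟨h1, h2⟩ => ⟨h1.symm, h2.symm⟩⟩
  loopless := ⟨fun u h => h.1 rfl⟩

/-- `f` is an `L(2,1)`-labeling of `G`: labels of adjacent vertices differ by at least 2,
labels of vertices at distance 2 differ by at least 1. -/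
def IsL21Labeling {V : Type*} (G : SimpleGraph V) (f : V → ℕ) : Prop :=
  (∀ u v, G.Adj u v → 2 ≤ |(f u : ℤ) - (f v : ℤ)|) ∧
  (∀ u v, G.dist u v = 2 → 1 ≤ |(f u : ℤ) - (f v : ℤ)|)

/-- The span of a labeling: largest label minus smallest label. -/
noncomputable def spanOf {V : Type*} (f : V → ℕ) : ℕ :=
  sSup (Set.range f) - sInf (Set.range f)

/-- The `λ`-number of `G`: the minimum span over all `L(2,1)`-labelings of `G`. -/
noncomputable def lambdaNumber {V : Type*} (G : SimpleGraph V) : ℕ :=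
  sInf { s : ℕ | ∃ f : V → ℕ, IsL21Labeling G f ∧ spanOf f = s }


private def gg (m n : ℕ) (v : Fin m × ZMod n) : ZMod 11 :=
  5 * ((v.1 : ℕ) : ZMod 11) + 2 * ((v.2.val : ℕ) : ZMod 11)

private lemma val_shift {a b c : ZMod 11} {k : ℕ} (h : a = b + c) (hc : c.val = k) :
    a.val = (b.val + k) % 11 := by rw [h, ZMod.val_add, hc]

private lemma classify {m n ℓ : ℕ} (hn : 11 ∣ n) [NeZero n] (hm : 3 ≤ m)
    (hl : ((ℓ : ℕ) : ZMod 11) = -3 * (m : ZMod 11))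
    {p q : Fin m × ZMod n} (h : bundleStep m n ℓ p q) :
    ((p.1 : ℕ) = (q.1 : ℕ) ∧
      ((q.2 = p.2 + 1 ∧ (gg m n q).val = ((gg m n p).val + 2) % 11)
        ∨ (q.2 = p.2 - 1 ∧ (gg m n q).val = ((gg m n p).val + 9) % 11)))
    ∨ (∃ t : ZMod n,
        ((t = -1 ∧ (gg m n q).val = ((gg m n p).val + 3) % 11)
          ∨ (t = 0 ∧ (gg m n q).val = ((gg m n p).val + 5) % 11)
          ∨ (t = 1 ∧ (gg m n q).val = ((gg m n p).val + 7) % 11)) ∧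
        (((q.1 : ℕ) = (p.1 : ℕ) + 1 ∧ q.2 = p.2 + t)
          ∨ ((p.1 : ℕ) = m - 1 ∧ (q.1 : ℕ) = 0 ∧ q.2 = p.2 + (ℓ : ZMod n) + t))) := by
  have h11 : (11 : ZMod 11) = 0 := by decide
  have KEY : ∀ x : ZMod n, ((x.val : ℕ) : ZMod 11) = ZMod.castHom hn (ZMod 11) x := fun x => by
    rw [ZMod.natCast_val, ZMod.castHom_apply]
  have hm1 : ((m - 1 : ℕ) : ZMod 11) = (m : ZMod 11) - 1 := by
    rw [Nat.cast_sub (by omega)]; norm_num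
  rcases h with ⟨hpq, hf | hf⟩ | ⟨hb, hf | hf | hf⟩ | ⟨hp1, hq1, hf | hf | hf⟩
  · exact Or.inl ⟨by rw [hpq], Or.inl ⟨hf, val_shift (c := 2) (by
      unfold gg; rw [hpq, KEY, KEY, hf, map_add, map_one]; ring) (by decide)⟩⟩
  · exact Or.inl ⟨by rw [hpq], Or.inr ⟨hf, val_shift (c := -2) (by
      unfold gg; rw [hpq, KEY, KEY, hf, map_sub, map_one]; ring) (by decide)⟩⟩
  · refine Or.inr ⟨-1, Or.inl ⟨rfl, val_shift (c := 3) (by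
      unfold gg; rw [← hb, KEY, KEY, hf, map_sub, map_one]; push_cast; ring) (by decide)⟩,
      Or.inl ⟨hb.symm, by rw [hf]; try ring⟩⟩
  · refine Or.inr ⟨0, Or.inr (Or.inl ⟨rfl, val_shift (c := 5) (by
      unfold gg; rw [← hb, KEY, KEY, hf]; push_cast; ring) (by decide)⟩),
      Or.inl ⟨hb.symm, by rw [hf]; try ring⟩⟩
  · refine Or.inr ⟨1, Or.inr (Or.inr ⟨rfl, val_shift (c := 7) (by
      unfold gg; rw [← hb, KEY, KEY, hf, map_add, map_one]; push_cast; try ring) (by decide)⟩),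
      Or.inl ⟨hb.symm, by rw [hf]; try ring⟩⟩
  · refine Or.inr ⟨-1, Or.inl ⟨rfl, val_shift (c := 3) (by
      unfold gg
      rw [hq1, hp1, hm1, KEY, KEY, hf, map_sub, map_add, map_one, map_natCast]
      push_cast
      rw [hl]
      linear_combination (-(m : ZMod 11)) * h11) (by decide)⟩,
      Or.inr ⟨hp1, hq1, by rw [hf]; try ring⟩⟩
  · refine Or.inr ⟨0, Or.inr (Or.inl ⟨rfl, val_shift (c := 5) (by
      unfold gg
      rw [hq1, hp1, hm1, KEY, KEY, hf, map_add, map_natCast]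
      push_cast
      try rw [hl]
      linear_combination (-(m : ZMod 11)) * h11) (by decide)⟩),
      Or.inr ⟨hp1, hq1, by rw [hf]; try ring⟩⟩
  · refine Or.inr ⟨1, Or.inr (Or.inr ⟨rfl, val_shift (c := 7) (by
      unfold gg
      rw [hq1, hp1, hm1, KEY, KEY, hf, map_add, map_add, map_one, map_natCast]
      push_cast
      try rw [hl]
      linear_combination (-(m : ZMod 11)) * h11) (by decide)⟩),
      Or.inr ⟨hp1, hq1, by rw [hf]; try ring⟩⟩

set_option maxHeartbeats 2000000 in
private lemma two_step {m n ℓ : ℕ} (hn : 11 ∣ n) [NeZero n] (hm : 3 ≤ m)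
    (hl : ((ℓ : ℕ) : ZMod 11) = -3 * (m : ZMod 11)) (u w v : Fin m × ZMod n)
    (h1 : bundleStep m n ℓ u w ∨ bundleStep m n ℓ w u)
    (h2 : bundleStep m n ℓ w v ∨ bundleStep m n ℓ v w)
    (hG : (gg m n u).val = (gg m n v).val) : u = v := by
  have bu := ZMod.val_lt (gg m n u)
  have bw := ZMod.val_lt (gg m n w)
  have bv := ZMod.val_lt (gg m n v)
  have fu := u.1.isLt
  have fw := w.1.isLt
  have fv := v.1.isLt
  have C1 := h1.imp (classify hn hm hl) (classify hn hm hl)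
  have C2 := h2.imp (classify hn hm hl) (classify hn hm hl)
  rcases C1 with
      ((⟨h1a, (⟨h1c, h1d⟩ | ⟨h1c, h1d⟩)⟩ |
        ⟨t1, (⟨rfl, h1d⟩ | ⟨rfl, h1d⟩ | ⟨rfl, h1d⟩), (⟨h1a, h1c⟩ | ⟨h1a, h1b, h1c⟩)⟩) |
       (⟨h1a, (⟨h1c, h1d⟩ | ⟨h1c, h1d⟩)⟩ |
        ⟨t1, (⟨rfl, h1d⟩ | ⟨rfl, h1d⟩ | ⟨rfl, h1d⟩), (⟨h1a, h1c⟩ | ⟨h1a, h1b, h1c⟩)⟩)) <;>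
    rcases C2 with
      ((⟨h2a, (⟨h2c, h2d⟩ | ⟨h2c, h2d⟩)⟩ |
        ⟨t2, (⟨rfl, h2d⟩ | ⟨rfl, h2d⟩ | ⟨rfl, h2d⟩), (⟨h2a, h2c⟩ | ⟨h2a, h2b, h2c⟩)⟩) |
       (⟨h2a, (⟨h2c, h2d⟩ | ⟨h2c, h2d⟩)⟩ |
        ⟨t2, (⟨rfl, h2d⟩ | ⟨rfl, h2d⟩ | ⟨rfl, h2d⟩), (⟨h2a, h2c⟩ | ⟨h2a, h2b, h2c⟩)⟩)) <;>
    first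
      | (exfalso; omega)
      | (refine Prod.ext (Fin.val_injective (by omega)) (by
          first
            | linear_combination h1c + h2c
            | linear_combination h1c - h2c
            | linear_combination -h1c + h2c
            | linear_combination -h1c - h2c))


theorem g1_isL21Labeling (m n ℓ : ℕ) (hm : 3 ≤ m) (hn : 11 ∣ n) (hn0 : 0 < n) (hℓ : ℓ < n)
    (h : ∃ k : ℤ, (ℓ : ℤ) = (11 * k - 3 * m) % n) :
    IsL21Labeling (strongBundle m n ℓ)
      (fun v => (5 * (v.1 : ℕ) + 2 * v.2.val) % 11) ∧
    ∀ v : Fin m × ZMod n, (5 * (v.1 : ℕ) + 2 * v.2.val) % 11 ≤ 10 := by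
  haveI : NeZero n := ⟨hn0.ne'⟩
  have h11 : (11 : ZMod 11) = 0 := by decide
  obtain ⟨k, hk⟩ := h
  have hl : ((ℓ : ℕ) : ZMod 11) = -3 * (m : ZMod 11) := by
    have hdvd : (11 : ℤ) ∣ (n : ℤ) := Int.natCast_dvd_natCast.mpr hn
    have h1 : ((ℓ : ℤ) : ZMod 11) = ((11 * k - 3 * m : ℤ) : ZMod 11) := by
      rw [hk]
      exact (ZMod.intCast_eq_intCast_iff _ _ _).mpr (Int.emod_emod_of_dvd _ hdvd)
    push_cast at h1
    rw [h1]
    linear_combination (k : ZMod 11) * h11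
  have hFg : ∀ v : Fin m × ZMod n, (5 * (v.1 : ℕ) + 2 * v.2.val) % 11 = (gg m n v).val := by
    intro v
    have : gg m n v = ((5 * (v.1 : ℕ) + 2 * v.2.val : ℕ) : ZMod 11) := by
      unfold gg; push_cast; ring
    rw [this, ZMod.val_natCast]
  refine ⟨⟨?_, ?_⟩, ?_⟩
  · rintro u v ⟨hne, hstep⟩
    simp only [hFg]
    have bu := ZMod.val_lt (gg m n u)
    have bv := ZMod.val_lt (gg m n v)
    rw [le_abs]
    rcases hstep with hs | hs <;>
      rcases classify hn hm hl hs with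
        (⟨-, (⟨-, hd⟩ | ⟨-, hd⟩)⟩ | ⟨t, (⟨-, hd⟩ | ⟨-, hd⟩ | ⟨-, hd⟩), -⟩) <;>
      omega
  · intro u v hd
    have hne : u ≠ v := by
      rintro rfl
      rw [SimpleGraph.dist_self] at hd
      omega
    obtain ⟨p, hp⟩ := SimpleGraph.exists_walk_of_dist_ne_zero
      (by omega : (strongBundle m n ℓ).dist u v ≠ 0)
    rw [hd] at hp
    cases p with
    | nil => simp at hp
    | cons ha q =>
      cases q with
      | nil => simp at hp
      | cons hb r =>
        cases r with
        | cons hc r' => simp [SimpleGraph.Walk.length_cons] at hp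
        | nil =>
          simp only [hFg]
          have hne' : (gg m n u).val ≠ (gg m n v).val := by
            intro heq
            exact hne (two_step hn hm hl u _ v ha.2 hb.2 heq)
          rw [le_abs]
          have bu := ZMod.val_lt (gg m n u)
          have bv := ZMod.val_lt (gg m n v)
          omega
  · intro v
    have := Nat.mod_lt (5 * (v.1 : ℕ) + 2 * v.2.val) (show 0 < 11 by norm_num)
    omega
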